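/- The MHD vortex is a stationary solution of the homogeneous ideal MHD equations: for constants κ_p, m_p ∈ ℝ, γ > 1, let r² = x² + y² and define on ℝ² the fields ρ ≡ 1, u = (−κ_p e^{(1−r²)/2} y, κ_p e^{(1−r²)/2} x, 0), B = (−m_p e^{(1−r²)/2} y, m_p e^{(1−r²)/2} x, 0), p(x,y) = 1 + ½(m_p²(1−r²) − κ_p²) e^{1−r²}, and E = p/(γ−1) + ½(u₁²+u₂²) + ½(B₁²+B₂²). Assume p > 0 everywhere on the considered domain. Then the conserved vector Ũ = (ρ, ρu₁, ρu₂, 0, E, B₁, B₂, 0) satisfies F(Ũ)_x + G(Ũ)_y = 0 at every point, i.e. all eight components of the flux divergence vanish (in particular u × B = 0, so the induction fluxes vanish identically, and the momentum balance ∂_x(ρu₁²+Π₁₁) + ∂_y(ρu₁u₂+Π₁₂) = 0 and its y-counterpart hold). -/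

import Mathlib

/-- Pressure recovered from the conserved variables
`U = (ρ, ρu₁, ρu₂, ρu₃, E, B₁, B₂, B₃)`:
`E = p/(γ−1) + ½ρ|u|² + ½|B|²`. -/
noncomputable def pres (γ : ℝ) (U : Fin 8 → ℝ) : ℝ :=
  (γ - 1) * (U 4 - ((U 1) ^ 2 + (U 2) ^ 2 + (U 3) ^ 2) / (2 * U 0)
    - ((U 5) ^ 2 + (U 6) ^ 2 + (U 7) ^ 2) / 2)

/-- The `x`-direction flux of the ideal MHD system. -/
noncomputable def Fflux (γ : ℝ) (U : Fin 8 → ℝ) : Fin 8 → ℝ :=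
  ![U 1,
    (U 1) ^ 2 / U 0 + (pres γ U + ((U 6) ^ 2 + (U 7) ^ 2 - (U 5) ^ 2) / 2),
    U 1 * U 2 / U 0 + (-(U 5 * U 6)),
    U 1 * U 3 / U 0 + (-(U 5 * U 7)),
    U 4 * (U 1 / U 0) + (U 1 / U 0) * (pres γ U + ((U 6) ^ 2 + (U 7) ^ 2 - (U 5) ^ 2) / 2)
      + (U 2 / U 0) * (-(U 5 * U 6)) + (U 3 / U 0) * (-(U 5 * U 7)),
    0,
    (U 3 / U 0) * U 5 - (U 1 / U 0) * U 7,
    -((U 1 / U 0) * U 6 - (U 2 / U 0) * U 5)]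

/-- The `y`-direction flux of the ideal MHD system. -/
noncomputable def Gflux (γ : ℝ) (U : Fin 8 → ℝ) : Fin 8 → ℝ :=
  ![U 2,
    U 2 * U 1 / U 0 + (-(U 6 * U 5)),
    (U 2) ^ 2 / U 0 + (pres γ U + ((U 5) ^ 2 + (U 7) ^ 2 - (U 6) ^ 2) / 2),
    U 2 * U 3 / U 0 + (-(U 6 * U 7)),
    U 4 * (U 2 / U 0) + (U 1 / U 0) * (-(U 6 * U 5))
      + (U 2 / U 0) * (pres γ U + ((U 5) ^ 2 + (U 7) ^ 2 - (U 6) ^ 2) / 2)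
      + (U 3 / U 0) * (-(U 6 * U 7)),
    -((U 1 / U 0) * U 6 - (U 2 / U 0) * U 5),
    0,
    (U 2 / U 0) * U 7 - (U 3 / U 0) * U 6]

/-- Gravitational source term `S(U) = (0, 0, −ρg, 0, −ρu₂ g, 0, 0, 0)`. -/
noncomputable def Ssrc (g : ℝ) (U : Fin 8 → ℝ) : Fin 8 → ℝ :=
  ![0, 0, -(U 0) * g, 0, -(U 2) * g, 0, 0, 0]

/-- The conserved vector of the MHD vortex: `ρ ≡ 1`,
`u = κ_p e^{(1−r²)/2}(−y, x, 0)`, `B = m_p e^{(1−r²)/2}(−y, x, 0)`,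
`p = 1 + ½(m_p²(1−r²) − κ_p²)e^{1−r²}`, `E = p/(γ−1) + ½|u|² + ½|B|²`. -/
noncomputable def vortexU (γ κp mp : ℝ) (x y : ℝ) : Fin 8 → ℝ :=
  ![1,
    -κp * Real.exp ((1 - (x ^ 2 + y ^ 2)) / 2) * y,
    κp * Real.exp ((1 - (x ^ 2 + y ^ 2)) / 2) * x,
    0,
    (1 + (mp ^ 2 * (1 - (x ^ 2 + y ^ 2)) - κp ^ 2) / 2 * Real.exp (1 - (x ^ 2 + y ^ 2)))
        / (γ - 1)
      + ((-κp * Real.exp ((1 - (x ^ 2 + y ^ 2)) / 2) * y) ^ 2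
          + (κp * Real.exp ((1 - (x ^ 2 + y ^ 2)) / 2) * x) ^ 2) / 2
      + ((-mp * Real.exp ((1 - (x ^ 2 + y ^ 2)) / 2) * y) ^ 2
          + (mp * Real.exp ((1 - (x ^ 2 + y ^ 2)) / 2) * x) ^ 2) / 2,
    -mp * Real.exp ((1 - (x ^ 2 + y ^ 2)) / 2) * y,
    mp * Real.exp ((1 - (x ^ 2 + y ^ 2)) / 2) * x,
    0]


private lemma vec8_0 (a₀ a₁ a₂ a₃ a₄ a₅ a₆ a₇ : ℝ) :
    (![a₀,a₁,a₂,a₃,a₄,a₅,a₆,a₇] : Fin 8 → ℝ) 0 = a₀ := rfl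
private lemma vec8_1 (a₀ a₁ a₂ a₃ a₄ a₅ a₆ a₇ : ℝ) :
    (![a₀,a₁,a₂,a₃,a₄,a₅,a₆,a₇] : Fin 8 → ℝ) 1 = a₁ := rfl
private lemma vec8_2 (a₀ a₁ a₂ a₃ a₄ a₅ a₆ a₇ : ℝ) :
    (![a₀,a₁,a₂,a₃,a₄,a₅,a₆,a₇] : Fin 8 → ℝ) 2 = a₂ := rfl
private lemma vec8_3 (a₀ a₁ a₂ a₃ a₄ a₅ a₆ a₇ : ℝ) :
    (![a₀,a₁,a₂,a₃,a₄,a₅,a₆,a₇] : Fin 8 → ℝ) 3 = a₃ := rfl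
private lemma vec8_4 (a₀ a₁ a₂ a₃ a₄ a₅ a₆ a₇ : ℝ) :
    (![a₀,a₁,a₂,a₃,a₄,a₅,a₆,a₇] : Fin 8 → ℝ) 4 = a₄ := rfl
private lemma vec8_5 (a₀ a₁ a₂ a₃ a₄ a₅ a₆ a₇ : ℝ) :
    (![a₀,a₁,a₂,a₃,a₄,a₅,a₆,a₇] : Fin 8 → ℝ) 5 = a₅ := rfl
private lemma vec8_6 (a₀ a₁ a₂ a₃ a₄ a₅ a₆ a₇ : ℝ) :
    (![a₀,a₁,a₂,a₃,a₄,a₅,a₆,a₇] : Fin 8 → ℝ) 6 = a₆ := rfl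
private lemma vec8_7 (a₀ a₁ a₂ a₃ a₄ a₅ a₆ a₇ : ℝ) :
    (![a₀,a₁,a₂,a₃,a₄,a₅,a₆,a₇] : Fin 8 → ℝ) 7 = a₇ := rfl

private lemma hexpAux (s t : ℝ) :
    HasDerivAt (fun t' : ℝ => Real.exp ((1 - (t' ^ 2 + s ^ 2)) / 2))
      (-t * Real.exp ((1 - (t ^ 2 + s ^ 2)) / 2)) t := by
  have h1 : HasDerivAt (fun t' : ℝ => (1 - (t' ^ 2 + s ^ 2)) / 2) (-t) t := by
    have h := (((hasDerivAt_pow 2 t).add_const (s ^ 2)).const_sub 1).div_const 2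
    refine h.congr_deriv ?_
    push_cast; ring
  simpa [mul_comm] using h1.exp

private lemma hexpPowAux (s t : ℝ) (n : ℕ) :
    HasDerivAt (fun t' : ℝ => Real.exp ((1 - (t' ^ 2 + s ^ 2)) / 2) ^ n)
      (-(n : ℝ) * t * Real.exp ((1 - (t ^ 2 + s ^ 2)) / 2) ^ n) t := by
  have h := (hexpAux s t).pow n
  obtain _ | m := n
  · simpa using hasDerivAt_const t (1:ℝ)
  · refine h.congr_deriv ?_
    simp only [Nat.add_sub_cancel]
    push_cast; ring

private lemma hformAux (s a p0 p1 p2 : ℝ) (n : ℕ) (t : ℝ) :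
    HasDerivAt (fun t' : ℝ => a + (p0 + p1 * t' + p2 * t' ^ 2) *
        Real.exp ((1 - (t' ^ 2 + s ^ 2)) / 2) ^ n)
      ((p1 + 2 * p2 * t) * Real.exp ((1 - (t ^ 2 + s ^ 2)) / 2) ^ n
        + (p0 + p1 * t + p2 * t ^ 2) *
          (-(n : ℝ) * t * Real.exp ((1 - (t ^ 2 + s ^ 2)) / 2) ^ n)) t := by
  have hpoly : HasDerivAt (fun t' : ℝ => p0 + p1 * t' + p2 * t' ^ 2) (p1 + 2 * p2 * t) t := by
    have h := (((hasDerivAt_id t).const_mul p1).const_add p0).add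
      ((hasDerivAt_pow 2 t).const_mul p2)
    refine h.congr_deriv ?_
    push_cast; ring
  exact (hpoly.mul (hexpPowAux s t n)).const_add a

set_option maxHeartbeats 4000000 in
/-- The MHD vortex is a stationary solution of the homogeneous ideal
MHD equations: provided the pressure is positive on the domain, `F(Ũ)_x + G(Ũ)_y = 0`
at every point (all eight components); in particular `u × B = 0`, so the induction fluxes
vanish identically. -/
theorem vortex_stationary (γ κp mp : ℝ) (hγ : 1 < γ)
    (hp : ∀ x y : ℝ,
      0 < 1 + (mp ^ 2 * (1 - (x ^ 2 + y ^ 2)) - κp ^ 2) / 2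
          * Real.exp (1 - (x ^ 2 + y ^ 2))) :
    (∀ x y : ℝ,
      deriv (fun x' => Fflux γ (vortexU γ κp mp x' y)) x
        + deriv (fun y' => Gflux γ (vortexU γ κp mp x y')) y = 0)
    ∧ (∀ x y : ℝ,
        vortexU γ κp mp x y 2 * vortexU γ κp mp x y 7
            - vortexU γ κp mp x y 3 * vortexU γ κp mp x y 6 = 0
        ∧ vortexU γ κp mp x y 3 * vortexU γ κp mp x y 5
            - vortexU γ κp mp x y 1 * vortexU γ κp mp x y 7 = 0
        ∧ vortexU γ κp mp x y 1 * vortexU γ κp mp x y 6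
            - vortexU γ κp mp x y 2 * vortexU γ κp mp x y 5 = 0) := by
  have hg : γ - 1 ≠ 0 := by linarith
  constructor
  · intro x y
    have hsF : ∀ t : ℝ, Real.exp (1 - (t ^ 2 + y ^ 2))
        = Real.exp ((1 - (t ^ 2 + y ^ 2)) / 2) * Real.exp ((1 - (t ^ 2 + y ^ 2)) / 2) := by
      intro t; rw [← Real.exp_add]; congr 1; ring
    have hsG : ∀ t : ℝ, Real.exp (1 - (x ^ 2 + t ^ 2))
        = Real.exp ((1 - (t ^ 2 + x ^ 2)) / 2) * Real.exp ((1 - (t ^ 2 + x ^ 2)) / 2) := by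
      intro t; rw [← Real.exp_add]; congr 1; ring
    have hwG : ∀ t : ℝ, Real.exp ((1 - (x ^ 2 + t ^ 2)) / 2)
        = Real.exp ((1 - (t ^ 2 + x ^ 2)) / 2) := by
      intro t; congr 1; ring
    have hF : HasDerivAt (fun x' => Fflux γ (vortexU γ κp mp x' y))
        (![κp * x * y * Real.exp ((1 - (x ^ 2 + y ^ 2)) / 2),
           -2 * x * (κp ^ 2 * y ^ 2 + (mp ^ 2 * (1 - 2 * y ^ 2) - κp ^ 2) / 2) * Real.exp ((1 - (x ^ 2 + y ^ 2)) / 2) ^ 2,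
           (mp ^ 2 - κp ^ 2) * y * (1 - 2 * x ^ 2) * Real.exp ((1 - (x ^ 2 + y ^ 2)) / 2) ^ 2,
           0,
           κp * x * y * (γ / (γ - 1)) * Real.exp ((1 - (x ^ 2 + y ^ 2)) / 2) + (2 * (-κp * y * (-(mp ^ 2 / 2) * (γ / (γ - 1)) + (κp ^ 2 + mp ^ 2) / 2 + mp ^ 2 / 2) + κp * mp ^ 2 * y) * x - 3 * x * ((-κp * y * ((mp ^ 2 * (1 - y ^ 2) - κp ^ 2) / 2 * (γ / (γ - 1)) + (κp ^ 2 + mp ^ 2) * y ^ 2 / 2 - mp ^ 2 * y ^ 2 / 2)) + (-κp * y * (-(mp ^ 2 / 2) * (γ / (γ - 1)) + (κp ^ 2 + mp ^ 2) / 2 + mp ^ 2 / 2) + κp * mp ^ 2 * y) * x ^ 2)) * Real.exp ((1 - (x ^ 2 + y ^ 2)) / 2) ^ 3,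
           0,
           0,
           0]) x := by
      apply hasDerivAt_pi.2
      intro i; fin_cases i
      · show HasDerivAt (fun x' => Fflux γ (vortexU γ κp mp x' y) 0) (κp * x * y * Real.exp ((1 - (x ^ 2 + y ^ 2)) / 2)) x
        have eq : (fun x' => Fflux γ (vortexU γ κp mp x' y) 0) = fun t : ℝ => 0 + (-κp * y + 0 * t + 0 * t ^ 2) * Real.exp ((1 - (t ^ 2 + y ^ 2)) / 2) ^ 1 := by
          funext t
          simp only [Fflux, Gflux, vortexU, pres, vec8_0, vec8_1, vec8_2, vec8_3, vec8_4, vec8_5, vec8_6, vec8_7]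
          ring
        rw [eq]
        convert hformAux y 0 (-κp * y) 0 0 1 x using 1
        push_cast; ring
      · show HasDerivAt (fun x' => Fflux γ (vortexU γ κp mp x' y) 1) (-2 * x * (κp ^ 2 * y ^ 2 + (mp ^ 2 * (1 - 2 * y ^ 2) - κp ^ 2) / 2) * Real.exp ((1 - (x ^ 2 + y ^ 2)) / 2) ^ 2) x
        have eq : (fun x' => Fflux γ (vortexU γ κp mp x' y) 1) = fun t : ℝ => 1 + (κp ^ 2 * y ^ 2 + (mp ^ 2 * (1 - 2 * y ^ 2) - κp ^ 2) / 2 + 0 * t + 0 * t ^ 2) * Real.exp ((1 - (t ^ 2 + y ^ 2)) / 2) ^ 2 := by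
          funext t
          simp only [Fflux, Gflux, vortexU, pres, vec8_0, vec8_1, vec8_2, vec8_3, vec8_4, vec8_5, vec8_6, vec8_7]
          rw [hsF t]
          field_simp
          ring
        rw [eq]
        convert hformAux y 1 (κp ^ 2 * y ^ 2 + (mp ^ 2 * (1 - 2 * y ^ 2) - κp ^ 2) / 2) 0 0 2 x using 1
        push_cast; ring
      · show HasDerivAt (fun x' => Fflux γ (vortexU γ κp mp x' y) 2) ((mp ^ 2 - κp ^ 2) * y * (1 - 2 * x ^ 2) * Real.exp ((1 - (x ^ 2 + y ^ 2)) / 2) ^ 2) x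
        have eq : (fun x' => Fflux γ (vortexU γ κp mp x' y) 2) = fun t : ℝ => 0 + (0 + (mp ^ 2 - κp ^ 2) * y * t + 0 * t ^ 2) * Real.exp ((1 - (t ^ 2 + y ^ 2)) / 2) ^ 2 := by
          funext t
          simp only [Fflux, Gflux, vortexU, pres, vec8_0, vec8_1, vec8_2, vec8_3, vec8_4, vec8_5, vec8_6, vec8_7]
          ring
        rw [eq]
        convert hformAux y 0 0 ((mp ^ 2 - κp ^ 2) * y) 0 2 x using 1
        push_cast; ring
      · show HasDerivAt (fun x' => Fflux γ (vortexU γ κp mp x' y) 3) (0 : ℝ) x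
        have eq : (fun x' => Fflux γ (vortexU γ κp mp x' y) 3) = fun _ : ℝ => (0 : ℝ) := by
          funext t
          simp only [Fflux, Gflux, vortexU, pres, vec8_0, vec8_1, vec8_2, vec8_3, vec8_4, vec8_5, vec8_6, vec8_7]
          try ring
        rw [eq]
        exact hasDerivAt_const x 0
      · show HasDerivAt (fun x' => Fflux γ (vortexU γ κp mp x' y) 4) (κp * x * y * (γ / (γ - 1)) * Real.exp ((1 - (x ^ 2 + y ^ 2)) / 2) + (2 * (-κp * y * (-(mp ^ 2 / 2) * (γ / (γ - 1)) + (κp ^ 2 + mp ^ 2) / 2 + mp ^ 2 / 2) + κp * mp ^ 2 * y) * x - 3 * x * ((-κp * y * ((mp ^ 2 * (1 - y ^ 2) - κp ^ 2) / 2 * (γ / (γ - 1)) + (κp ^ 2 + mp ^ 2) * y ^ 2 / 2 - mp ^ 2 * y ^ 2 / 2)) + (-κp * y * (-(mp ^ 2 / 2) * (γ / (γ - 1)) + (κp ^ 2 + mp ^ 2) / 2 + mp ^ 2 / 2) + κp * mp ^ 2 * y) * x ^ 2)) * Real.exp ((1 - (x ^ 2 + y ^ 2)) / 2) ^ 3)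 x
        have eq : (fun x' => Fflux γ (vortexU γ κp mp x' y) 4) = fun t : ℝ => (0 + (-κp * y * (γ / (γ - 1)) + 0 * t + 0 * t ^ 2) * Real.exp ((1 - (t ^ 2 + y ^ 2)) / 2) ^ 1) + (0 + ((-κp * y * ((mp ^ 2 * (1 - y ^ 2) - κp ^ 2) / 2 * (γ / (γ - 1)) + (κp ^ 2 + mp ^ 2) * y ^ 2 / 2 - mp ^ 2 * y ^ 2 / 2)) + 0 * t + (-κp * y * (-(mp ^ 2 / 2) * (γ / (γ - 1)) + (κp ^ 2 + mp ^ 2) / 2 + mp ^ 2 / 2) + κp * mp ^ 2 * y) * t ^ 2) * Real.exp ((1 - (t ^ 2 + y ^ 2)) / 2) ^ 3) := by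
          funext t
          simp only [Fflux, Gflux, vortexU, pres, vec8_0, vec8_1, vec8_2, vec8_3, vec8_4, vec8_5, vec8_6, vec8_7]
          rw [hsF t]
          field_simp
          ring
        rw [eq]
        refine ((hformAux y 0 (-κp * y * (γ / (γ - 1))) 0 0 1 x).add (hformAux y 0 (-κp * y * ((mp ^ 2 * (1 - y ^ 2) - κp ^ 2) / 2 * (γ / (γ - 1)) + (κp ^ 2 + mp ^ 2) * y ^ 2 / 2 - mp ^ 2 * y ^ 2 / 2)) 0 (-κp * y * (-(mp ^ 2 / 2) * (γ / (γ - 1)) + (κp ^ 2 + mp ^ 2) / 2 + mp ^ 2 / 2) + κp * mp ^ 2 * y) 3 x)).congr_deriv ?_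
        push_cast; ring
      · show HasDerivAt (fun x' => Fflux γ (vortexU γ κp mp x' y) 5) (0 : ℝ) x
        have eq : (fun x' => Fflux γ (vortexU γ κp mp x' y) 5) = fun _ : ℝ => (0 : ℝ) := by
          funext t
          simp only [Fflux, Gflux, vortexU, pres, vec8_0, vec8_1, vec8_2, vec8_3, vec8_4, vec8_5, vec8_6, vec8_7]
          try ring
        rw [eq]
        exact hasDerivAt_const x 0
      · show HasDerivAt (fun x' => Fflux γ (vortexU γ κp mp x' y) 6) (0 : ℝ) x
        have eq : (fun x' => Fflux γ (vortexU γ κp mp x' y) 6) = fun _ : ℝ => (0 : ℝ) := by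
          funext t
          simp only [Fflux, Gflux, vortexU, pres, vec8_0, vec8_1, vec8_2, vec8_3, vec8_4, vec8_5, vec8_6, vec8_7]
          try ring
        rw [eq]
        exact hasDerivAt_const x 0
      · show HasDerivAt (fun x' => Fflux γ (vortexU γ κp mp x' y) 7) (0 : ℝ) x
        have eq : (fun x' => Fflux γ (vortexU γ κp mp x' y) 7) = fun _ : ℝ => (0 : ℝ) := by
          funext t
          simp only [Fflux, Gflux, vortexU, pres, vec8_0, vec8_1, vec8_2, vec8_3, vec8_4, vec8_5, vec8_6, vec8_7]
          try ring
        rw [eq]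
        exact hasDerivAt_const x 0
    have hG : HasDerivAt (fun y' => Gflux γ (vortexU γ κp mp x y'))
        (![-κp * x * y * Real.exp ((1 - (y ^ 2 + x ^ 2)) / 2),
           (mp ^ 2 - κp ^ 2) * x * (1 - 2 * y ^ 2) * Real.exp ((1 - (y ^ 2 + x ^ 2)) / 2) ^ 2,
           -2 * y * (κp ^ 2 * x ^ 2 + (mp ^ 2 * (1 - 2 * x ^ 2) - κp ^ 2) / 2) * Real.exp ((1 - (y ^ 2 + x ^ 2)) / 2) ^ 2,
           0,
           -κp * x * y * (γ / (γ - 1)) * Real.exp ((1 - (y ^ 2 + x ^ 2)) / 2) + (2 * (κp * x * (-(mp ^ 2 / 2) * (γ / (γ - 1)) + (κp ^ 2 + mp ^ 2) / 2 + mp ^ 2 / 2) - κp * mp ^ 2 * x) * y - 3 * y * ((κp * x * ((mp ^ 2 * (1 - x ^ 2) - κp ^ 2) / 2 * (γ / (γ - 1)) + (κp ^ 2 + mp ^ 2) * x ^ 2 / 2 - mp ^ 2 * x ^ 2 / 2)) + (κp * x * (-(mp ^ 2 / 2) * (γ / (γ - 1)) + (κp ^ 2 + mp ^ 2) / 2 +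 mp ^ 2 / 2) - κp * mp ^ 2 * x) * y ^ 2)) * Real.exp ((1 - (y ^ 2 + x ^ 2)) / 2) ^ 3,
           0,
           0,
           0]) y := by
      apply hasDerivAt_pi.2
      intro i; fin_cases i
      · show HasDerivAt (fun y' => Gflux γ (vortexU γ κp mp x y') 0) (-κp * x * y * Real.exp ((1 - (y ^ 2 + x ^ 2)) / 2)) y
        have eq : (fun y' => Gflux γ (vortexU γ κp mp x y') 0) = fun t : ℝ => 0 + (κp * x + 0 * t + 0 * t ^ 2) * Real.exp ((1 - (t ^ 2 + x ^ 2)) / 2) ^ 1 := by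
          funext t
          simp only [Fflux, Gflux, vortexU, pres, vec8_0, vec8_1, vec8_2, vec8_3, vec8_4, vec8_5, vec8_6, vec8_7]
          simp only [hwG]
          ring
        rw [eq]
        convert hformAux x 0 (κp * x) 0 0 1 y using 1
        push_cast; ring
      · show HasDerivAt (fun y' => Gflux γ (vortexU γ κp mp x y') 1) ((mp ^ 2 - κp ^ 2) * x * (1 - 2 * y ^ 2) * Real.exp ((1 - (y ^ 2 + x ^ 2)) / 2) ^ 2) y
        have eq : (fun y' => Gflux γ (vortexU γ κp mp x y') 1) = fun t : ℝ => 0 + (0 + (mp ^ 2 - κp ^ 2) * x * t + 0 * t ^ 2) * Real.exp ((1 - (t ^ 2 + x ^ 2)) / 2) ^ 2 := by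
          funext t
          simp only [Fflux, Gflux, vortexU, pres, vec8_0, vec8_1, vec8_2, vec8_3, vec8_4, vec8_5, vec8_6, vec8_7]
          simp only [hwG]
          ring
        rw [eq]
        convert hformAux x 0 0 ((mp ^ 2 - κp ^ 2) * x) 0 2 y using 1
        push_cast; ring
      · show HasDerivAt (fun y' => Gflux γ (vortexU γ κp mp x y') 2) (-2 * y * (κp ^ 2 * x ^ 2 + (mp ^ 2 * (1 - 2 * x ^ 2) - κp ^ 2) / 2) * Real.exp ((1 - (y ^ 2 + x ^ 2)) / 2) ^ 2) y
        have eq : (fun y' => Gflux γ (vortexU γ κp mp x y') 2) = fun t : ℝ => 1 + (κp ^ 2 * x ^ 2 + (mp ^ 2 * (1 - 2 * x ^ 2) - κp ^ 2) / 2 + 0 * t + 0 * t ^ 2) * Real.exp ((1 - (t ^ 2 + x ^ 2)) / 2) ^ 2 := by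
          funext t
          simp only [Fflux, Gflux, vortexU, pres, vec8_0, vec8_1, vec8_2, vec8_3, vec8_4, vec8_5, vec8_6, vec8_7]
          rw [hsG t]
          simp only [hwG]
          field_simp
          ring
        rw [eq]
        convert hformAux x 1 (κp ^ 2 * x ^ 2 + (mp ^ 2 * (1 - 2 * x ^ 2) - κp ^ 2) / 2) 0 0 2 y using 1
        push_cast; ring
      · show HasDerivAt (fun y' => Gflux γ (vortexU γ κp mp x y') 3) (0 : ℝ) y
        have eq : (fun y' => Gflux γ (vortexU γ κp mp x y') 3) = fun _ : ℝ => (0 : ℝ) := by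
          funext t
          simp only [Fflux, Gflux, vortexU, pres, vec8_0, vec8_1, vec8_2, vec8_3, vec8_4, vec8_5, vec8_6, vec8_7]
          try ring
        rw [eq]
        exact hasDerivAt_const y 0
      · show HasDerivAt (fun y' => Gflux γ (vortexU γ κp mp x y') 4) (-κp * x * y * (γ / (γ - 1)) * Real.exp ((1 - (y ^ 2 + x ^ 2)) / 2) + (2 * (κp * x * (-(mp ^ 2 / 2) * (γ / (γ - 1)) + (κp ^ 2 + mp ^ 2) / 2 + mp ^ 2 / 2) - κp * mp ^ 2 * x) * y - 3 * y * ((κp * x * ((mp ^ 2 * (1 - x ^ 2) - κp ^ 2) / 2 * (γ / (γ - 1)) + (κp ^ 2 + mp ^ 2) * x ^ 2 / 2 - mp ^ 2 * x ^ 2 / 2)) + (κp * x * (-(mp ^ 2 / 2) * (γ / (γ - 1)) + (κp ^ 2 + mp ^ 2) / 2 + mp ^ 2 / 2) - κp * mp ^ 2 * x) * y ^ 2)) * Real.exp ((1 - (y ^ 2 + x ^ 2)) / 2) ^ 3) y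
        have eq : (fun y' => Gflux γ (vortexU γ κp mp x y') 4) = fun t : ℝ => (0 + (κp * x * (γ / (γ - 1)) + 0 * t + 0 * t ^ 2) * Real.exp ((1 - (t ^ 2 + x ^ 2)) / 2) ^ 1) + (0 + ((κp * x * ((mp ^ 2 * (1 - x ^ 2) - κp ^ 2) / 2 * (γ / (γ - 1)) + (κp ^ 2 + mp ^ 2) * x ^ 2 / 2 - mp ^ 2 * x ^ 2 / 2)) + 0 * t + (κp * x * (-(mp ^ 2 / 2) * (γ / (γ - 1)) + (κp ^ 2 + mp ^ 2) / 2 + mp ^ 2 / 2) - κp * mp ^ 2 * x) * t ^ 2) * Real.exp ((1 - (t ^ 2 + x ^ 2)) / 2) ^ 3) := by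
          funext t
          simp only [Fflux, Gflux, vortexU, pres, vec8_0, vec8_1, vec8_2, vec8_3, vec8_4, vec8_5, vec8_6, vec8_7]
          rw [hsG t]
          simp only [hwG]
          field_simp
          ring
        rw [eq]
        refine ((hformAux x 0 (κp * x * (γ / (γ - 1))) 0 0 1 y).add (hformAux x 0 (κp * x * ((mp ^ 2 * (1 - x ^ 2) - κp ^ 2) / 2 * (γ / (γ - 1)) + (κp ^ 2 + mp ^ 2) * x ^ 2 / 2 - mp ^ 2 * x ^ 2 / 2)) 0 (κp * x * (-(mp ^ 2 / 2) * (γ / (γ - 1)) + (κp ^ 2 + mp ^ 2) / 2 + mp ^ 2 / 2) - κp * mp ^ 2 * x) 3 y)).congr_deriv ?_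
        push_cast; ring
      · show HasDerivAt (fun y' => Gflux γ (vortexU γ κp mp x y') 5) (0 : ℝ) y
        have eq : (fun y' => Gflux γ (vortexU γ κp mp x y') 5) = fun _ : ℝ => (0 : ℝ) := by
          funext t
          simp only [Fflux, Gflux, vortexU, pres, vec8_0, vec8_1, vec8_2, vec8_3, vec8_4, vec8_5, vec8_6, vec8_7]
          try ring
        rw [eq]
        exact hasDerivAt_const y 0
      · show HasDerivAt (fun y' => Gflux γ (vortexU γ κp mp x y') 6) (0 : ℝ) y
        have eq : (fun y' => Gflux γ (vortexU γ κp mp x y') 6) = fun _ : ℝ => (0 : ℝ) := by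
          funext t
          simp only [Fflux, Gflux, vortexU, pres, vec8_0, vec8_1, vec8_2, vec8_3, vec8_4, vec8_5, vec8_6, vec8_7]
          try ring
        rw [eq]
        exact hasDerivAt_const y 0
      · show HasDerivAt (fun y' => Gflux γ (vortexU γ κp mp x y') 7) (0 : ℝ) y
        have eq : (fun y' => Gflux γ (vortexU γ κp mp x y') 7) = fun _ : ℝ => (0 : ℝ) := by
          funext t
          simp only [Fflux, Gflux, vortexU, pres, vec8_0, vec8_1, vec8_2, vec8_3, vec8_4, vec8_5, vec8_6, vec8_7]
          try ring
        rw [eq]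
        exact hasDerivAt_const y 0
    rw [hF.deriv, hG.deriv]
    have hxy : Real.exp ((1 - (y ^ 2 + x ^ 2)) / 2) = Real.exp ((1 - (x ^ 2 + y ^ 2)) / 2) := by
      congr 1; ring
    funext i
    fin_cases i <;>
      · show _ + _ = (0 : ℝ)
        simp only [Pi.add_apply, hxy, Fin.reduceFinMk, Matrix.cons_val]
        try field_simp
        try ring
  · intro x y
    refine ⟨?_, ?_, ?_⟩ <;> (simp only [vortexU, vec8_0, vec8_1, vec8_2, vec8_3, vec8_4, vec8_5, vec8_6, vec8_7]; ring)
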